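/- Let μ₀ be a commutative multiplication on A whose associator satisfies A_{μ₀}(x,y,z) = A_{μ₀}(y,x,z) for all x,y,z (a commutative pre-Lie algebra). For bilinear maps φ,φ' on A set D(φ,φ')(x,y,z) = φ(x,φ'(y,z)) − φ(φ'(x,y),z). Let (φ_i)_{i≥0} be a pre-Lie formal deformation of μ₀, i.e. φ₀ = μ₀ and for every k ≥ 0 and all x,y,z ∈ A: ∑_{i+j=k} [D(φ_i,φ_j)(x,y,z) − D(φ_i,φ_j)(y,x,z)] = 0. Then the skew-symmetric part ψ₁ of φ₁ satisfies the Jacobi identity, and μ₀(x,φ₁(y,z)) − μ₀(y,φ₁(x,z)) + φ₁(x,μ₀(y,z)) − φ₁(y,μ₀(x,z)) = μ₀(z,ψ₁(x,y)) for all x,y,z ∈ A. -/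

import Mathlib

open Finset

/-- The associator of a bilinear multiplication. -/
def assocMap {K A : Type*} [Field K] [AddCommGroup A] [Module K A]
    (μ : A →ₗ[K] A →ₗ[K] A) (x y z : A) : A :=
  μ x (μ y z) - μ (μ x y) z

/-- The skew-symmetric part of a bilinear multiplication. -/
def skewPart {K A : Type*} [Field K] [AddCommGroup A] [Module K A]
    (φ : A →ₗ[K] A →ₗ[K] A) (x y : A) : A :=
  φ x y - φ y x

/-- `D(φ,φ')(x,y,z) = φ(x,φ'(y,z)) − φ(φ'(x,y),z)`. -/
def defD {K A : Type*} [Field K] [AddCommGroup A] [Module K A]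
    (φ φ' : A →ₗ[K] A →ₗ[K] A) (x y z : A) : A :=
  φ x (φ' y z) - φ (φ' x y) z

/-- If `(φ_i)` is a pre-Lie formal deformation of a commutative pre-Lie multiplication
`μ₀`, then the skew-symmetric part `ψ₁` of `φ₁` satisfies the Jacobi identity, and
`μ₀(x,φ₁(y,z)) − μ₀(y,φ₁(x,z)) + φ₁(x,μ₀(y,z)) − φ₁(y,μ₀(x,z)) = μ₀(z,ψ₁(x,y))`. -/
theorem prelie_deformation {K A : Type*} [Field K] [CharZero K]
    [AddCommGroup A] [Module K A]
    (μ₀ : A →ₗ[K] A →ₗ[K] A)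
    (hcomm : ∀ x y : A, μ₀ x y = μ₀ y x)
    (hprelie : ∀ x y z : A, assocMap μ₀ x y z = assocMap μ₀ y x z)
    (φ : ℕ → (A →ₗ[K] A →ₗ[K] A))
    (h0 : φ 0 = μ₀)
    (hdef : ∀ k : ℕ, ∀ x y z : A,
      ∑ p ∈ Finset.HasAntidiagonal.antidiagonal k,
        (defD (φ p.1) (φ p.2) x y z - defD (φ p.1) (φ p.2) y x z) = 0) :
    (∀ x y z : A,
      skewPart (φ 1) x (skewPart (φ 1) y z) + skewPart (φ 1) y (skewPart (φ 1) z x) +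
        skewPart (φ 1) z (skewPart (φ 1) x y) = 0) ∧
    (∀ x y z : A,
      μ₀ x (φ 1 y z) - μ₀ y (φ 1 x z) + φ 1 x (μ₀ y z) - φ 1 y (μ₀ x z) =
        μ₀ z (skewPart (φ 1) x y)) := by
  constructor
  · intro x y z
    have Ha := hdef 2 x y z
    have Hb := hdef 2 y z x
    have Hc := hdef 2 z x y
    rw [show (Finset.HasAntidiagonal.antidiagonal 2 : Finset (ℕ×ℕ)) = {(0,2),(1,1),(2,0)} from by decide,
      Finset.sum_insert (by decide), Finset.sum_insert (by decide),
      Finset.sum_singleton] at Ha Hb Hc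
    simp only [defD, h0] at Ha Hb Hc
    simp only [skewPart, map_sub, LinearMap.sub_apply]
    linear_combination (norm := abel1) Ha + Hb + Hc
      + hcomm (φ 2 x y) z - hcomm (φ 2 y x) z + hcomm (φ 2 y z) x - hcomm (φ 2 z y) x
      + hcomm (φ 2 z x) y - hcomm (φ 2 x z) y
      + LinearMap.congr_fun (LinearMap.congr_arg (f := φ 2) (hcomm x y)) z
      + LinearMap.congr_fun (LinearMap.congr_arg (f := φ 2) (hcomm y z)) x
      + LinearMap.congr_fun (LinearMap.congr_arg (f := φ 2) (hcomm z x)) y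
      - LinearMap.congr_arg (f := φ 2 x) (hcomm y z)
      - LinearMap.congr_arg (f := φ 2 y) (hcomm z x)
      - LinearMap.congr_arg (f := φ 2 z) (hcomm x y)
  · intro x y z
    have H := hdef 1 x y z
    rw [show (Finset.HasAntidiagonal.antidiagonal 1 : Finset (ℕ×ℕ)) = {(0,1),(1,0)} from by decide,
      Finset.sum_insert (by decide), Finset.sum_singleton] at H
    simp only [defD, h0] at H
    simp only [skewPart, map_sub]
    linear_combination (norm := abel1) H
      + hcomm (φ 1 x y) z - hcomm (φ 1 y x) z
      + LinearMap.congr_fun (LinearMap.congr_arg (f := φ 1) (hcomm x y)) z
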